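/- Let V be a finite-dimensional complex inner product space and T : V → V a self-adjoint linear operator. Let v = w + u be a nonzero vector, where w ≠ 0 satisfies Tw = μw for a real number μ, and u lies in the sum of the eigenspaces of T with eigenvalues strictly greater than μ. Then there exist constants C > 0 and c > 0 such that for all t ≥ 0, ‖ exp(−tT)v / ‖exp(−tT)v‖ − w/‖w‖ ‖ ≤ C e^{−ct}; in particular, the normalized flow exp(−tT)v/‖exp(−tT)v‖ converges exponentially fast to the unit eigenvector w/‖w‖ as t → ∞. -/

import Mathlib

/-- `exp` of an operator acting on an eigenvector. -/
lemma exp_apply_eigenvector' {V : Type*} [NormedAddCommGroup V] [NormedSpace ℂ V]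
    [CompleteSpace V] (A : V →L[ℂ] V) (a : ℂ) (x : V) (hx : A x = a • x) :
    NormedSpace.exp A x = Complex.exp a • x := by
  have hpow : ∀ n : ℕ, (A ^ n) x = a ^ n • x := by
    intro n
    induction n with
    | zero => simp
    | succ n ih =>
      rw [pow_succ, pow_succ, ContinuousLinearMap.mul_apply, hx, map_smul, ih, smul_smul,
        mul_comm]
  have h1 := NormedSpace.exp_series_hasSum_exp' (𝕂 := ℂ) A
  have h2 := (ContinuousLinearMap.apply ℂ V x).hasSum h1
  simp only [ContinuousLinearMap.apply_apply] at h2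
  have h2' : HasSum (fun n : ℕ => (((n.factorial : ℂ))⁻¹ * a ^ n) • x) (NormedSpace.exp A x) := by
    refine h2.congr_fun fun n => ?_
    rw [ContinuousLinearMap.smul_apply, hpow, smul_smul]
  have h3 := (NormedSpace.exp_series_hasSum_exp' (𝕂 := ℂ) a).smul_const x
  rw [Complex.exp_eq_exp_ℂ]
  exact h2'.unique (by simpa [smul_eq_mul] using h3)

/-- Comparison of normalized vectors. -/
lemma norm_normalize_sub_normalize_le {V : Type*} [NormedAddCommGroup V] [NormedSpace ℝ V]
    (g w : V) (hg : g ≠ 0) (hw : w ≠ 0) :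
    ‖‖g‖⁻¹ • g - ‖w‖⁻¹ • w‖ ≤ 2 * ‖g - w‖ / ‖g‖ := by
  have hgn : (0:ℝ) < ‖g‖ := norm_pos_iff.mpr hg
  have hwn : (0:ℝ) < ‖w‖ := norm_pos_iff.mpr hw
  have key : ‖g‖⁻¹ • g - ‖w‖⁻¹ • w = ‖g‖⁻¹ • (g - w) + (‖g‖⁻¹ - ‖w‖⁻¹) • w := by
    rw [smul_sub, sub_smul]; abel
  rw [key]
  have h1 : ‖‖g‖⁻¹ • (g - w)‖ = ‖g‖⁻¹ * ‖g - w‖ := by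
    rw [norm_smul, Real.norm_of_nonneg (by positivity)]
  have h2 : ‖(‖g‖⁻¹ - ‖w‖⁻¹) • w‖ ≤ ‖g - w‖ / ‖g‖ := by
    rw [norm_smul, Real.norm_eq_abs]
    have heq : ‖g‖⁻¹ - ‖w‖⁻¹ = (‖w‖ - ‖g‖) / (‖g‖ * ‖w‖) := by field_simp
    have habs : |‖g‖⁻¹ - ‖w‖⁻¹| = |‖w‖ - ‖g‖| / (‖g‖ * ‖w‖) := by
      rw [heq, abs_div, abs_of_pos (mul_pos hgn hwn)]
    rw [habs]
    have hle : |‖w‖ - ‖g‖| ≤ ‖g - w‖ := by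
      rw [← norm_neg (g - w)]
      simpa using abs_norm_sub_norm_le w g
    calc |‖w‖ - ‖g‖| / (‖g‖ * ‖w‖) * ‖w‖ = |‖w‖ - ‖g‖| / ‖g‖ := by field_simp
      _ ≤ ‖g - w‖ / ‖g‖ := by gcongr
  calc ‖‖g‖⁻¹ • (g - w) + (‖g‖⁻¹ - ‖w‖⁻¹) • w‖
      ≤ ‖‖g‖⁻¹ • (g - w)‖ + ‖(‖g‖⁻¹ - ‖w‖⁻¹) • w‖ := norm_add_le _ _
    _ ≤ ‖g‖⁻¹ * ‖g - w‖ + ‖g - w‖ / ‖g‖ := by rw [h1]; gcongr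
    _ = 2 * ‖g - w‖ / ‖g‖ := by field_simp; ring

set_option maxHeartbeats 1000000 in
/-- **Exponential convergence to the associated graded point.** Let `T` be a
self-adjoint operator on a finite-dimensional complex inner product space, and
let `v = w + u` be nonzero with `w ≠ 0` an eigenvector of `T` with (real)
eigenvalue `μ`, and `u` in the sum of the eigenspaces of `T` with eigenvalues
strictly greater than `μ`.  Then the normalized flow
`exp(−tT) v / ‖exp(−tT) v‖` converges exponentially fast to `w / ‖w‖`. -/
theorem normalized_flow_exponential_convergence (V : Type*) [NormedAddCommGroup V]
    [InnerProductSpace ℂ V] [FiniteDimensional ℂ V]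
    (T : V →L[ℂ] V) (hT : IsSelfAdjoint T) (w u : V) (hw : w ≠ 0) (μ : ℝ)
    (hwe : T w = (μ : ℂ) • w)
    (hu : u ∈ ⨆ (ν : ℝ) (_ : μ < ν), Module.End.eigenspace (T : V →ₗ[ℂ] V) (ν : ℂ))
    (hv : w + u ≠ 0) :
    ∃ C > (0 : ℝ), ∃ c > (0 : ℝ), ∀ t : ℝ, 0 ≤ t →
      ‖(‖NormedSpace.exp ((-(t : ℂ)) • T) (w + u)‖⁻¹ •
          NormedSpace.exp ((-(t : ℂ)) • T) (w + u)) - ‖w‖⁻¹ • w‖ ≤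
        C * Real.exp (-(c * t)) := by
  classical
  rw [iSup_subtype'] at hu
  rw [Submodule.mem_iSup_iff_exists_finsupp] at hu
  obtain ⟨f, hf, hsum⟩ := hu
  set s := f.support with hs
  have hwn : (0:ℝ) < ‖w‖ := norm_pos_iff.mpr hw
  -- the gap constant
  set F : Finset ℝ := insert 1 (Finset.image (fun i : {ν : ℝ // μ < ν} => (i : ℝ) - μ) s) with hF
  have hFne : F.Nonempty := ⟨1, by simp [hF]⟩
  set c : ℝ := F.min' hFne with hc
  have hcpos : 0 < c := by
    have hmem := F.min'_mem hFne
    rw [← hc] at hmem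
    rcases Finset.mem_insert.mp hmem with h | h
    · rw [h]; norm_num
    · obtain ⟨i, _, heq⟩ := Finset.mem_image.mp h
      have := i.2
      rw [← heq]
      linarith
  have hcle : ∀ i ∈ s, c ≤ (i : ℝ) - μ := fun i hi =>
    F.min'_le _ (Finset.mem_insert_of_mem (Finset.mem_image_of_mem _ hi))
  -- the size constant
  set K : ℝ := ∑ i ∈ s, ‖f i‖ with hK
  have hKnn : 0 ≤ K := Finset.sum_nonneg fun i _ => norm_nonneg _
  -- remainder
  set r : ℝ → V := fun t => ∑ i ∈ s, Complex.exp (((μ : ℂ) - (i : ℝ)) * t) • f i with hr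
  have hrle : ∀ t : ℝ, 0 ≤ t → ‖r t‖ ≤ K * Real.exp (-(c * t)) := by
    intro t ht
    calc ‖r t‖ ≤ ∑ i ∈ s, ‖Complex.exp (((μ : ℂ) - (i : ℝ)) * t) • f i‖ := by
          simp only [hr]
          exact norm_sum_le _ _
      _ ≤ ∑ i ∈ s, Real.exp (-(c * t)) * ‖f i‖ := by
          refine Finset.sum_le_sum fun i hi => ?_
          rw [norm_smul, Complex.norm_exp]
          have hre : (((μ : ℂ) - (i : ℝ)) * t).re = (μ - (i : ℝ)) * t := by
            push_cast
            simp [Complex.mul_re]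
          have hee : Real.exp ((((μ : ℂ) - (i : ℝ)) * t).re) ≤ Real.exp (-(c * t)) := by
            rw [hre]
            apply Real.exp_le_exp.mpr
            have := hcle i hi
            nlinarith
          exact mul_le_mul_of_nonneg_right hee (norm_nonneg _)
      _ = K * Real.exp (-(c * t)) := by rw [← Finset.mul_sum, ← hK, mul_comm]
  -- the rescaled flow
  set g : ℝ → V := fun t => w + r t with hg
  -- identification of the normalized flow
  have hnorm : ∀ t : ℝ,
      (‖NormedSpace.exp ((-(t : ℂ)) • T) (w + u)‖⁻¹ •
        NormedSpace.exp ((-(t : ℂ)) • T) (w + u)) = ‖g t‖⁻¹ • g t := by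
    intro t
    have hexpw : NormedSpace.exp ((-(t : ℂ)) • T) w = Complex.exp (-(t:ℂ) * μ) • w := by
      refine exp_apply_eigenvector' _ _ _ ?_
      rw [ContinuousLinearMap.smul_apply, hwe, smul_smul]
    have hexpu : ∀ i ∈ s, NormedSpace.exp ((-(t : ℂ)) • T) (f i)
        = Complex.exp (-(t:ℂ) * (i : ℝ)) • f i := by
      intro i _
      refine exp_apply_eigenvector' _ _ _ ?_
      have := Module.End.mem_eigenspace_iff.mp (hf i)
      rw [ContinuousLinearMap.smul_apply]
      change -(t:ℂ) • (T : V →ₗ[ℂ] V) (f i) = _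
      rw [this, smul_smul]
    have hexpv : NormedSpace.exp ((-(t : ℂ)) • T) (w + u)
        = Complex.exp (-(t:ℂ) * μ) • w
          + ∑ i ∈ s, Complex.exp (-(t:ℂ) * (i : ℝ)) • f i := by
      rw [map_add, hexpw, ← hsum, Finsupp.sum, map_sum]
      congr 1
      exact Finset.sum_congr rfl hexpu
    set x := NormedSpace.exp ((-(t : ℂ)) • T) (w + u) with hx
    have hgt : Complex.exp ((t:ℂ) * μ) • x = g t := by
      show _ = w + r t
      rw [hexpv, smul_add, Finset.smul_sum]
      simp only [hr]
      congr 1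
      · rw [smul_smul, ← Complex.exp_add,
          show (t:ℂ) * μ + -(t:ℂ) * μ = 0 by ring, Complex.exp_zero, one_smul]
      · refine Finset.sum_congr rfl fun i _ => ?_
        rw [smul_smul, ← Complex.exp_add]
        congr 2
        push_cast
        ring
    have hcoe : Complex.exp ((t:ℂ) * μ) • x = Real.exp (t * μ) • x := by
      have : Complex.exp ((t:ℂ) * μ) = ((Real.exp (t * μ) : ℝ) : ℂ) := by
        rw [Complex.ofReal_exp]; push_cast; ring_nf
      rw [this, Complex.coe_smul]
    have hρ : Real.exp (t * μ) ≠ 0 := (Real.exp_pos _).ne'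
    rw [← hgt, hcoe, norm_smul, Real.norm_of_nonneg (Real.exp_pos _).le, smul_smul,
      mul_inv]
    congr 1
    field_simp
  -- choice of the threshold time and constants
  set X : ℝ := 2 * (K + 1) / ‖w‖ with hX
  have hXpos : 0 < X := by positivity
  set T₀ : ℝ := max 0 (Real.log X / c) with hT₀
  have hT₀nn : 0 ≤ T₀ := le_max_left _ _
  have hT₀bound : Real.exp (-(c * T₀)) ≤ ‖w‖ / (2 * (K + 1)) := by
    have h1 : Real.log X ≤ c * T₀ := by
      have : Real.log X / c ≤ T₀ := le_max_right _ _
      calc Real.log X = c * (Real.log X / c) := by field_simp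
        _ ≤ c * T₀ := by gcongr
    have h2 : Real.exp (-(c * T₀)) ≤ Real.exp (-(Real.log X)) := by
      apply Real.exp_le_exp.mpr; linarith
    calc Real.exp (-(c * T₀)) ≤ Real.exp (-(Real.log X)) := h2
      _ = X⁻¹ := by rw [Real.exp_neg, Real.exp_log hXpos]
      _ = ‖w‖ / (2 * (K + 1)) := by rw [hX]; field_simp
  set C : ℝ := 4 * K / ‖w‖ + 2 * Real.exp (c * T₀) + 1 with hC
  have hCpos : 0 < C := by positivity
  have hgdef : ∀ t : ℝ, g t = w + r t := fun t => by rw [hg]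
  clear_value c K r g X T₀ C
  refine ⟨C, hCpos, c, hcpos, fun t ht => ?_⟩
  rw [hnorm t]
  have hrsmall : t > T₀ → ‖r t‖ ≤ ‖w‖ / 2 := by
    intro htT
    have h1 : Real.exp (-(c * t)) ≤ Real.exp (-(c * T₀)) :=
      Real.exp_le_exp.mpr (neg_le_neg (mul_le_mul_of_nonneg_left htT.le hcpos.le))
    calc ‖r t‖ ≤ K * Real.exp (-(c * t)) := hrle t ht
      _ ≤ K * (‖w‖ / (2 * (K + 1))) := by gcongr; exact h1.trans hT₀bound
      _ ≤ ‖w‖ / 2 := by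
          rw [show K * (‖w‖ / (2 * (K + 1))) = K * ‖w‖ / (2 * (K + 1)) by ring,
            div_le_div_iff₀ (by positivity) (by norm_num)]
          nlinarith
  rcases le_or_gt t T₀ with htle | htgt
  · -- small time: trivial bound by 2
    have h2 : ‖‖g t‖⁻¹ • g t - ‖w‖⁻¹ • w‖ ≤ 2 := by
      have hb : ∀ x : V, ‖‖x‖⁻¹ • x‖ ≤ 1 := by
        intro x
        rcases eq_or_ne x 0 with rfl | hx
        · simp
        · rw [norm_smul, Real.norm_of_nonneg (by positivity),
            inv_mul_cancel₀ (norm_pos_iff.mpr hx).ne']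
      calc ‖‖g t‖⁻¹ • g t - ‖w‖⁻¹ • w‖ ≤ ‖‖g t‖⁻¹ • g t‖ + ‖‖w‖⁻¹ • w‖ := norm_sub_le _ _
        _ ≤ 1 + 1 := add_le_add (hb _) (hb _)
        _ = 2 := by norm_num
    have h3 : 2 ≤ C * Real.exp (-(c * t)) := by
      have : 2 = 2 * Real.exp (c * T₀) * Real.exp (-(c * T₀)) := by
        rw [mul_assoc, ← Real.exp_add]; simp
      rw [this]
      have he : Real.exp (-(c * T₀)) ≤ Real.exp (-(c * t)) :=
        Real.exp_le_exp.mpr (neg_le_neg (mul_le_mul_of_nonneg_left htle hcpos.le))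
      have hC2 : 2 * Real.exp (c * T₀) ≤ C := by
        rw [hC]
        have : 0 ≤ 4 * K / ‖w‖ := by positivity
        linarith
      calc 2 * Real.exp (c * T₀) * Real.exp (-(c * T₀))
          ≤ 2 * Real.exp (c * T₀) * Real.exp (-(c * t)) := by gcongr
        _ ≤ C * Real.exp (-(c * t)) := by gcongr
    exact h2.trans h3
  · -- large time
    have hrs := hrsmall htgt
    have hgnorm : ‖w‖ / 2 ≤ ‖g t‖ := by
      have : ‖w‖ - ‖r t‖ ≤ ‖g t‖ := by
        calc ‖w‖ - ‖r t‖ ≤ ‖w + r t‖ := by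
              have := norm_add_le (w + r t) (-r t)
              simp only [add_neg_cancel_right, norm_neg] at this
              linarith
          _ = ‖g t‖ := by rw [hgdef]
      linarith
    have hgne : g t ≠ 0 := by
      intro h
      rw [h, norm_zero] at hgnorm
      linarith
    have hmain := norm_normalize_sub_normalize_le (g t) w hgne hw
    have hgw : g t - w = r t := by rw [hgdef]; abel
    rw [hgw] at hmain
    calc ‖‖g t‖⁻¹ • g t - ‖w‖⁻¹ • w‖ ≤ 2 * ‖r t‖ / ‖g t‖ := hmain
      _ ≤ 2 * ‖r t‖ / (‖w‖ / 2) := by gcongr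
      _ = 4 * ‖r t‖ / ‖w‖ := by field_simp; ring
      _ ≤ 4 * (K * Real.exp (-(c * t))) / ‖w‖ := by gcongr; exact hrle t ht
      _ = 4 * K / ‖w‖ * Real.exp (-(c * t)) := by ring
      _ ≤ C * Real.exp (-(c * t)) := by
          gcongr
          rw [hC]
          have : 0 ≤ 2 * Real.exp (c * T₀) := by positivity
          linarith
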